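/- Let G = (x − 𝔮(y), U(x−𝔮(y), y)) be the secret map. In 𝔽_q[z₁,…,z_n, w₁,…,w_m] (with z_j = x_j for j ≤ t and z_{t+k} = y_k), define R'^{(j)} = w_j − z_j + 𝔮_j(z_{t+1},…,z_n) for j = 1, …, t, and R^{(i)} = U_i(w₁,…,w_t, z_{t+1},…,z_n) − w_{t+i} for i = 1, …, m−t. Then: (a) each R'^{(j)} has total degree at most 2, contains no monomial of the form w_a w_b nor of the form w_a z_b, and satisfies R'^{(j)}(z̄, G(z̄)) = 0 for all z̄ ∈ 𝔽_q^n; (b) the m polynomials R'^{(1)}, …, R'^{(t)}, R^{(1)}, …, R^{(m−t)} are linearly independent over 𝔽_q. -/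

import Mathlib

open MvPolynomial

/-- Substitution `x_j ↦ x_j - q_j(y)` (identity on the `y`-variables). -/
noncomputable def substQ {K : Type*} [Field K] (n t : ℕ)
    (Q : Fin t → MvPolynomial (Fin n) K) :
    MvPolynomial (Fin n) K →ₐ[K] MvPolynomial (Fin n) K :=
  aeval fun k : Fin n => if hk : (k : ℕ) < t then X k - Q ⟨(k : ℕ), hk⟩ else X k

/-- The secret map `G = (x - q(y), U(x - q(y), y))`, as a family of `m` polynomials. -/
noncomputable def Gsecret {K : Type*} [Field K] {n m t : ℕ} (htn : t < n)
    (Q : Fin t → MvPolynomial (Fin n) K) (U : Fin (m - t) → MvPolynomial (Fin n) K)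
    (i : Fin m) : MvPolynomial (Fin n) K :=
  if h : (i : ℕ) < t then X (⟨(i : ℕ), h.trans htn⟩ : Fin n) - Q ⟨(i : ℕ), h⟩
  else substQ n t Q (U ⟨(i : ℕ) - t, by have := i.isLt; omega⟩)

/-- The relation `R^{(i)} = U_i(w_1, …, w_t, z_{t+1}, …, z_n) - w_{t+i}` in the polynomial
ring `K[z_1, …, z_n, w_1, …, w_m]` (with `z`-variables `Sum.inl` and `w`-variables `Sum.inr`). -/
noncomputable def Rrel {K : Type*} [Field K] {n m t : ℕ} (htm : t ≤ m)
    (U : Fin (m - t) → MvPolynomial (Fin n) K) (i : Fin (m - t)) :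
    MvPolynomial (Fin n ⊕ Fin m) K :=
  aeval (fun k : Fin n =>
      if hk : (k : ℕ) < t then X (Sum.inr (⟨(k : ℕ), hk.trans_le htm⟩ : Fin m))
      else X (Sum.inl k)) (U i)
    - X (Sum.inr (⟨t + (i : ℕ), by have := i.isLt; omega⟩ : Fin m))

/-- The relation `R'^{(j)} = w_j - z_j + q_j(z_{t+1}, …, z_n)`. -/
noncomputable def Rrel' {K : Type*} [Field K] {n m t : ℕ} (htn : t < n) (htm : t ≤ m)
    (Q : Fin t → MvPolynomial (Fin n) K) (j : Fin t) :
    MvPolynomial (Fin n ⊕ Fin m) K :=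
  X (Sum.inr (Fin.castLE htm j)) - X (Sum.inl (Fin.castLE htn.le j))
    + rename Sum.inl (Q j)

lemma coeff_rename_inl_eq_zero {K : Type*} [Field K] {n m : ℕ}
    (q : MvPolynomial (Fin n) K) (d : (Fin n ⊕ Fin m) →₀ ℕ) (a : Fin m)
    (ha : d (Sum.inr a) ≠ 0) : coeff d (rename Sum.inl q) = 0 := by
  by_contra h
  obtain ⟨u, hu, -⟩ := coeff_rename_ne_zero _ _ _ h
  apply ha
  rw [← hu, Finsupp.mapDomain_notin_range]
  rintro ⟨x, hx⟩
  exact Sum.inl_ne_inr hx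

lemma coeffR' {K : Type*} [Field K] {n m t : ℕ} (htn : t < n) (htm : t ≤ m)
    (Q : Fin t → MvPolynomial (Fin n) K) (j : Fin t) (a : Fin m) :
    coeff (Finsupp.single (Sum.inr a) 1) (Rrel' htn htm Q j)
      = if ((j : ℕ) = (a : ℕ)) then 1 else 0 := by
  classical
  unfold Rrel'
  rw [coeff_add, coeff_sub, coeff_X', coeff_X',
    coeff_rename_inl_eq_zero _ _ a (by simp), add_zero]
  simp [Finsupp.single_eq_single_iff, Fin.ext_iff]

lemma coeffR {K : Type*} [Field K] {n m t : ℕ} (htm : t ≤ m)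
    (U : Fin (m - t) → MvPolynomial (Fin n) K) (i : Fin (m - t)) (a : Fin m)
    (ha : t ≤ (a : ℕ)) :
    coeff (Finsupp.single (Sum.inr a) 1) (Rrel htm U i)
      = if ((a : ℕ) = t + (i : ℕ)) then -1 else 0 := by
  classical
  set h : Fin n → Fin n ⊕ Fin m := fun k =>
    if hk : (k : ℕ) < t then Sum.inr (⟨(k : ℕ), hk.trans_le htm⟩ : Fin m) else Sum.inl k with hh
  have key : (aeval (fun k : Fin n =>
      if hk : (k : ℕ) < t then X (Sum.inr (⟨(k : ℕ), hk.trans_le htm⟩ : Fin m))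
      else X (Sum.inl k)) (U i) : MvPolynomial (Fin n ⊕ Fin m) K) = rename h (U i) := by
    have : (fun k : Fin n =>
        if hk : (k : ℕ) < t then (X (Sum.inr (⟨(k : ℕ), hk.trans_le htm⟩ : Fin m)) :
          MvPolynomial (Fin n ⊕ Fin m) K)
        else X (Sum.inl k)) = fun k => X (h k) := by
      funext k
      by_cases hk : (k : ℕ) < t <;> simp [hh, hk]
    rw [this, rename_eq_aeval]
    rfl
  have hzero : coeff (Finsupp.single (Sum.inr a) 1) (rename h (U i)) = 0 := by
    by_contra hne
    obtain ⟨u, hu, -⟩ := coeff_rename_ne_zero _ _ _ hne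
    have : Finsupp.mapDomain h u (Sum.inr a) = 0 := by
      rw [Finsupp.mapDomain_notin_range]
      rintro ⟨k, hk⟩
      by_cases hkt : (k : ℕ) < t
      · rw [hh] at hk
        simp only [hkt, dif_pos] at hk
        have := congrArg (fun s => Sum.elim (fun x : Fin n => (0:ℕ)) Fin.val s) hk
        simp at this
        omega
      · rw [hh] at hk
        simp [hkt] at hk
    rw [hu] at this
    simp at this
  unfold Rrel
  rw [coeff_sub, key, hzero, coeff_X', zero_sub]
  simp only [Finsupp.single_eq_single_iff, Fin.ext_iff, Sum.inr.injEq, and_true, one_ne_zero,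
    and_self, or_false]
  rcases eq_or_ne ((a : ℕ)) (t + (i : ℕ)) with h1 | h1
  · simp [h1]
  · simp [h1, Ne.symm h1]

/-- (a) each `R'^{(j)}` has total degree ≤ 2, contains no monomial of the
form `w_a w_b` nor `w_a z_b` (every monomial involving a `w`-variable is a single `w_a`),
and vanishes at every input/output pair of `G`; (b) the `m` polynomials
`R'^{(1)}, …, R'^{(t)}, R^{(1)}, …, R^{(m-t)}` are linearly independent. -/
theorem stmt_13 {K : Type*} [Field K] [Fintype K] {n m t : ℕ}
    (ht : 0 < t) (htn : t < n) (htm : t ≤ m)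
    (Q : Fin t → MvPolynomial (Fin n) K)
    (hQdeg : ∀ j, (Q j).totalDegree ≤ 2)
    (hQvars : ∀ j, ∀ i ∈ (Q j).vars, t ≤ (i : ℕ))
    (U : Fin (m - t) → MvPolynomial (Fin n) K)
    (hUdeg : ∀ i, (U i).totalDegree ≤ 2) :
    (∀ j : Fin t,
      (Rrel' htn htm Q j).totalDegree ≤ 2 ∧
      (∀ d ∈ (Rrel' htn htm Q j).support, ∀ a : Fin m,
        d (Sum.inr a) ≠ 0 → d = Finsupp.single (Sum.inr a) 1) ∧
      (∀ z : Fin n → K,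
        eval (Sum.elim z (fun i => eval z (Gsecret htn Q U i))) (Rrel' htn htm Q j) = 0)) ∧
    LinearIndependent K (Sum.elim (Rrel' (m := m) htn htm Q) (Rrel htm U)) := by
  classical
  constructor
  · intro j
    refine ⟨?_, ?_, ?_⟩
    · unfold Rrel'
      refine le_trans (totalDegree_add _ _) (max_le (le_trans (totalDegree_sub _ _)
        (max_le ?_ ?_)) (le_trans (totalDegree_rename_le _ _) (hQdeg j)))
      · rw [totalDegree_X]; omega
      · rw [totalDegree_X]; omega
    · intro d hd a ha
      have h0 : coeff d (rename Sum.inl (Q j)) = 0 := coeff_rename_inl_eq_zero _ _ a ha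
      have hc := mem_support_iff.mp hd
      unfold Rrel' at hc
      rw [coeff_add, coeff_sub, h0, add_zero, coeff_X', coeff_X'] at hc
      have hne : ¬ (Finsupp.single (Sum.inl (Fin.castLE htn.le j) : Fin n ⊕ Fin m) (1:ℕ) = d) := by
        rintro rfl
        simp [Finsupp.single_apply] at ha
      rw [if_neg hne, sub_zero] at hc
      have hd' : Finsupp.single (Sum.inr (Fin.castLE htm j) : Fin n ⊕ Fin m) (1:ℕ) = d := by
        by_contra hcon
        rw [if_neg hcon] at hc
        exact hc rfl
      subst hd'
      rw [Finsupp.single_apply] at ha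
      split at ha
      · next heq => rw [← heq]
      · exact absurd rfl ha
    · intro z
      unfold Rrel'
      rw [map_add, map_sub, eval_X, eval_X, eval_rename]
      have h1 : Sum.elim z (fun i => eval z (Gsecret htn Q U i)) ∘ Sum.inl = z := rfl
      rw [h1]
      simp only [Sum.elim_inr, Sum.elim_inl]
      have h2 : Gsecret htn Q U (Fin.castLE htm j)
          = X (⟨(j : ℕ), j.isLt.trans htn⟩ : Fin n) - Q j := by
        unfold Gsecret
        rw [dif_pos (show ((Fin.castLE htm j : Fin m) : ℕ) < t from j.isLt)]
        rfl
      rw [h2]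
      rw [map_sub, eval_X]
      have h3 : (⟨(j : ℕ), j.isLt.trans htn⟩ : Fin n) = Fin.castLE htn.le j := rfl
      rw [h3]
      ring
  · set φ : MvPolynomial (Fin n ⊕ Fin m) K →ₗ[K] (Fin m → K) :=
      LinearMap.pi (fun a : Fin m => lcoeff K (Finsupp.single (Sum.inr a) 1)) with hφ
    refine LinearIndependent.of_comp φ ?_
    rw [Fintype.linearIndependent_iff]
    intro c hc
    have hc' : ∀ a : Fin m,
        (∑ j : Fin t, c (Sum.inl j) * coeff (Finsupp.single (Sum.inr a) 1) (Rrel' htn htm Q j))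
        + (∑ i : Fin (m - t),
            c (Sum.inr i) * coeff (Finsupp.single (Sum.inr a) 1) (Rrel htm U i)) = 0 := by
      intro a
      have := congrFun hc a
      simpa [hφ, Finset.sum_apply, Fintype.sum_sum_type, mul_comm] using this
    have hcr : ∀ i : Fin (m - t), c (Sum.inr i) = 0 := by
      intro i
      have hi : t + (i : ℕ) < m := by have := i.isLt; omega
      have := hc' ⟨t + (i : ℕ), hi⟩
      rw [Finset.sum_eq_zero (fun j _ => ?_), Finset.sum_eq_single i ?_ ?_] at this
      · rw [coeffR htm U i ⟨t + (i : ℕ), hi⟩ (by simp)] at this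
        simpa using this
      · intro i' _ hne
        rw [coeffR htm U i' ⟨t + (i : ℕ), hi⟩ (by simp)]
        rw [if_neg (by simp [Fin.ext_iff]; omega)]
        ring
      · intro h
        exact absurd (Finset.mem_univ i) h
      · rw [coeffR' htn htm Q j ⟨t + (i : ℕ), hi⟩]
        rw [if_neg (by have := j.isLt; simp; omega)]
        ring
    intro s
    match s with
    | Sum.inr i => exact hcr i
    | Sum.inl j =>
      have hj : (j : ℕ) < m := j.isLt.trans_le htm
      have := hc' ⟨(j : ℕ), hj⟩
      have hz : ∑ i : Fin (m - t),
          c (Sum.inr i) * coeff (Finsupp.single (Sum.inr (⟨(j : ℕ), hj⟩ : Fin m)) 1)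
            (Rrel htm U i) = 0 :=
        Finset.sum_eq_zero (fun i _ => by rw [hcr i, zero_mul])
      rw [hz, add_zero, Finset.sum_eq_single j ?_ ?_] at this
      · rw [coeffR' htn htm Q j ⟨(j : ℕ), hj⟩, if_pos rfl] at this
        simpa using this
      · intro j' _ hne
        rw [coeffR' htn htm Q j' ⟨(j : ℕ), hj⟩]
        rw [if_neg (by simpa [Fin.ext_iff] using fun h => hne (Fin.ext h))]
        ring
      · intro h
        exact absurd (Finset.mem_univ j) h
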